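/- Helly number of Z^d (Doignon's theorem): If F is a finite family of convex sets in R^d such that every subfamily of at most 2^d sets has a common point in Z^d, then ⋂F contains a point of Z^d. -/

import Mathlib

open Finset

namespace Doignon

variable {d : ℕ}


noncomputable def c {d : ℕ} (y : Fin d → ℤ) : Fin d → ℝ := fun i => (y i : ℝ)

def L (d : ℕ) : Set (Fin d → ℝ) := Set.range c

lemma hull_insert_hull (x : Fin d → ℝ) (S : Set (Fin d → ℝ)) :
    convexHull ℝ (insert x S) = convexHull ℝ (insert x (convexHull ℝ S)) := by
  apply le_antisymm
  · exact convexHull_mono (Set.insert_subset_insert (subset_convexHull ℝ S))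
  · apply convexHull_min _ (convex_convexHull ℝ _)
    apply Set.insert_subset (subset_convexHull ℝ _ (Set.mem_insert _ _))
    exact (convexHull_min (fun v hv => subset_convexHull ℝ _ (Set.mem_insert_of_mem _ hv))
      (convex_convexHull ℝ _))

lemma finite_hull_lattice {s : Set (Fin d → ℝ)} (hs : s.Finite) :
    (convexHull ℝ s ∩ L d).Finite := by
  have hb : Bornology.IsBounded (convexHull ℝ s) := (hs.isCompact_convexHull ℝ).isBounded
  obtain ⟨C, hC⟩ := hb.exists_norm_le
  have hsub : (convexHull ℝ s ∩ L d) ⊆ c '' {y : Fin d → ℤ | ∀ i, y i ∈ Set.Icc (-⌈C⌉) ⌈C⌉} := by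
    rintro x ⟨hx, y, rfl⟩
    refine ⟨y, fun i => ?_, rfl⟩
    have h1 : |(y i : ℝ)| ≤ C := by
      have := norm_le_pi_norm (c y) i
      simpa [c, Real.norm_eq_abs] using this.trans (hC _ hx)
    have h2 : (|y i| : ℝ) ≤ (⌈C⌉ : ℝ) := by
      exact_mod_cast h1.trans (Int.le_ceil C)
    have h3 : |y i| ≤ ⌈C⌉ := by exact_mod_cast h2
    exact abs_le.mp h3
  apply Set.Finite.subset _ hsub
  apply Set.Finite.image
  have : {y : Fin d → ℤ | ∀ i, y i ∈ Set.Icc (-⌈C⌉) ⌈C⌉} = Set.univ.pi (fun _ => Set.Icc (-⌈C⌉) ⌈C⌉) := by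
    ext y; simp [Set.mem_pi, Pi.le_def, forall_and]
  rw [this]
  exact Set.Finite.pi (fun _ => Set.finite_Icc _ _)



lemma lem_m {T : Set (Fin d → ℝ)} (hT : Convex ℝ T) {p q x : Fin d → ℝ}
    (hq : q ∈ T)
    (hx : x ∈ convexHull ℝ (insert (midpoint ℝ p q) T))
    (hp : p ∈ convexHull ℝ (insert x T)) : p ∈ T := by
  have hTne : T.Nonempty := ⟨q, hq⟩
  rw [convexHull_insert hTne, hT.convexHull_eq, convexJoin_singleton_left] at hx hp
  rw [Set.mem_iUnion₂] at hx hp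
  obtain ⟨w₁, hw₁, hxseg⟩ := hx
  obtain ⟨w₀, hw₀, hpseg⟩ := hp
  obtain ⟨γ, δ, hγ, hδ, hγδ, hxe⟩ := hxseg
  obtain ⟨α, β, hα, hβ, hαβ, hpe⟩ := hpseg
  set s : ℝ := α * γ / 2 with hs
  have hγ1 : γ ≤ 1 := by linarith
  have hα1 : α ≤ 1 := by linarith
  have hs0 : 0 ≤ s := by positivity
  have hs1 : 0 < 1 - s := by nlinarith
  have hmid : ∀ i, midpoint ℝ p q i = (p i + q i) / 2 := by
    intro i
    rw [midpoint_eq_smul_add, invOf_eq_inv]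
    simp [Pi.smul_apply]
    ring
  have key : ∀ i, (1 - s) * p i = s * q i + (α * δ) * w₁ i + β * w₀ i := by
    intro i
    have h1 : α * x i + β * w₀ i = p i := by
      have := congrFun hpe i
      simpa using this
    have h2 : γ * midpoint ℝ p q i + δ * w₁ i = x i := by
      have := congrFun hxe i
      simpa using this
    rw [hmid i] at h2
    rw [hs]
    nlinarith [h1, h2]
  have hδ' : δ = 1 - γ := by linarith
  have hβ' : β = 1 - α := by linarith
  have hcoeff : s + (α * δ) + β = 1 - s := by
    rw [hδ', hβ', hs]; ring
  have hpc : p = (s/(1-s)) • q + ((α*δ)/(1-s)) • w₁ + (β/(1-s)) • w₀ := by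
    funext i
    simp only [Pi.add_apply, Pi.smul_apply, smul_eq_mul]
    have := key i
    field_simp
    linarith [key i]
  have hmem : (s/(1-s)) • q + ((α*δ)/(1-s)) • w₁ + (β/(1-s)) • w₀ ∈ T := by
    have h3 := hT.sum_mem (t := (Finset.univ : Finset (Fin 3)))
      (w := ![s/(1-s), (α*δ)/(1-s), β/(1-s)]) (z := ![q, w₁, w₀])
      ?_ ?_ ?_
    · simpa [Fin.sum_univ_three] using h3
    · intro i _
      fin_cases i <;> simp <;> positivity
    · rw [Fin.sum_univ_three]
      simp only [Matrix.cons_val_zero, Matrix.cons_val_one, Matrix.head_cons, Matrix.cons_val_two, Matrix.tail_cons]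
      field_simp
      linarith [hcoeff]
    · intro i _
      fin_cases i <;> simpa using by assumption
  rw [hpc]; exact hmem

lemma key (d : ℕ) : ∀ N : ℕ, ∀ Y : Finset (Fin d → ℤ),
    2 ^ d + 1 ≤ Y.card →
    (convexHull ℝ (c '' (Y : Set (Fin d → ℤ))) ∩ L d).ncard ≤ N →
    ∃ w : Fin d → ℤ, ∀ y ∈ Y, c w ∈ convexHull ℝ (c '' ((Y.erase y) : Set (Fin d → ℤ))) := by
  intro N
  induction N using Nat.strong_induction_on with
  | _ N IH =>
  intro Y hcard hN
  classical
  by_cases hc0 : ∃ y₀ ∈ Y, c y₀ ∈ convexHull ℝ (c '' ((Y.erase y₀) : Set (Fin d → ℤ)))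
  · obtain ⟨y₀, hy₀Y, hy₀⟩ := hc0
    refine ⟨y₀, fun y hy => ?_⟩
    by_cases hyy : y = y₀
    · subst hyy; exact hy₀
    · exact subset_convexHull ℝ _ ⟨y₀, Finset.mem_coe.mpr
        (Finset.mem_erase.mpr ⟨fun h => hyy h.symm, hy₀Y⟩), rfl⟩
  push_neg at hc0
  -- pigeonhole
  have hcard2 : (Finset.univ : Finset (Fin d → ZMod 2)).card < Y.card := by
    have h2 : Fintype.card (Fin d → ZMod 2) = 2 ^ d := by
      simp [Fintype.card_fun]
    rw [Finset.card_univ, h2]; omega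
  obtain ⟨a, haY, b, hbY, hab, hparity⟩ :=
    Finset.exists_ne_map_eq_of_card_lt_of_maps_to hcard2
      (f := fun y => (fun i => ((y i : ZMod 2)))) (fun y _ => Finset.mem_univ _)
  -- midpoint integer point
  have hdvd : ∀ i, 2 ∣ (a i + b i) := by
    intro i
    have : ((a i + b i : ℤ) : ZMod 2) = 0 := by
      push_cast
      have h := congrFun hparity i
      rw [h]
      exact CharTwo.add_self_eq_zero _
    exact_mod_cast (ZMod.intCast_zmod_eq_zero_iff_dvd _ 2).mp this
  choose k hk using hdvd
  have hmid : c k = midpoint ℝ (c a) (c b) := by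
    funext i
    rw [midpoint_eq_smul_add, invOf_eq_inv]
    simp only [c, Pi.smul_apply, Pi.add_apply, smul_eq_mul]
    have : (a i : ℝ) + b i = 2 * k i := by exact_mod_cast congrArg (Int.cast : ℤ → ℝ) (hk i)
    rw [this]; ring
  -- midpoint lies in all hulls avoiding other points
  have hmids : ∀ y ∈ Y, y ≠ a → y ≠ b → c k ∈ convexHull ℝ (c '' ((Y.erase y) : Set (Fin d → ℤ))) := by
    intro y hyY hya hyb
    rw [hmid]
    refine (convex_convexHull ℝ _).segment_subset ?_ ?_ (midpoint_mem_segment _ _)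
    · exact subset_convexHull ℝ _ ⟨a, Finset.mem_coe.mpr
        (Finset.mem_erase.mpr ⟨fun h => hya h.symm, haY⟩), rfl⟩
    · exact subset_convexHull ℝ _ ⟨b, Finset.mem_coe.mpr
        (Finset.mem_erase.mpr ⟨fun h => hyb h.symm, hbY⟩), rfl⟩
  have hfin : (convexHull ℝ (c '' (Y : Set (Fin d → ℤ))) ∩ L d).Finite :=
    finite_hull_lattice (Set.Finite.image _ Y.finite_toSet)
  have main : ∀ p q : Fin d → ℤ, p ∈ Y → q ∈ Y → p ≠ q →
      c k = midpoint ℝ (c p) (c q) →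
      (∀ y ∈ Y, y ≠ p → y ≠ q → c k ∈ convexHull ℝ (c '' ((Y.erase y) : Set (Fin d → ℤ)))) →
      c k ∉ convexHull ℝ (c '' ((Y.erase p) : Set (Fin d → ℤ))) →
      ∃ w : Fin d → ℤ, ∀ y ∈ Y, c w ∈ convexHull ℝ (c '' ((Y.erase y) : Set (Fin d → ℤ))) := by
    intro p q hpY hqY hpq hmid' hmids' hza
    have hqpe : q ∈ Y.erase p := Finset.mem_erase.mpr ⟨fun h => hpq h.symm, hqY⟩
    have hkNot : k ∉ Y.erase p := fun hk' =>
      hza (subset_convexHull ℝ _ ⟨k, Finset.mem_coe.mpr hk', rfl⟩)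
    set Y'' : Finset (Fin d → ℤ) := insert k (Y.erase p) with hY''
    have himg : (c '' (Y'' : Set (Fin d → ℤ))) = insert (c k) (c '' ((Y.erase p) : Set (Fin d → ℤ))) := by
      rw [hY'', Finset.coe_insert, Set.image_insert_eq]
    have hcard'' : 2 ^ d + 1 ≤ Y''.card := by
      rw [hY'', Finset.card_insert_of_notMem hkNot, Finset.card_erase_of_mem hpY]
      omega
    have hsub : convexHull ℝ (c '' (Y'' : Set (Fin d → ℤ))) ⊆ convexHull ℝ (c '' (Y : Set (Fin d → ℤ))) := by
      apply convexHull_min _ (convex_convexHull ℝ _)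
      rw [himg]
      apply Set.insert_subset
      · rw [hmid']
        refine (convex_convexHull ℝ _).segment_subset ?_ ?_ (midpoint_mem_segment _ _)
        · exact subset_convexHull ℝ _ ⟨p, hpY, rfl⟩
        · exact subset_convexHull ℝ _ ⟨q, hqY, rfl⟩
      · exact (Set.image_mono (Finset.coe_subset.mpr (Finset.erase_subset _ _))).trans
          (subset_convexHull ℝ _)
    have hpNot : c p ∉ convexHull ℝ (c '' (Y'' : Set (Fin d → ℤ))) := by
      intro hmem
      apply hc0 p hpY
      refine lem_m (convex_convexHull ℝ (c '' ((Y.erase p) : Set (Fin d → ℤ)))) (q := c q) (x := c k) ?_ ?_ ?_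
      · exact subset_convexHull ℝ _ ⟨q, Finset.mem_coe.mpr hqpe, rfl⟩
      · rw [← hmid']
        exact subset_convexHull ℝ _ (Set.mem_insert _ _)
      · rw [himg] at hmem
        exact convexHull_mono (Set.insert_subset_insert (subset_convexHull ℝ _)) hmem
    have hltcard : (convexHull ℝ (c '' (Y'' : Set (Fin d → ℤ))) ∩ L d).ncard < N := by
      have hss : (convexHull ℝ (c '' (Y'' : Set (Fin d → ℤ))) ∩ L d) ⊂ (convexHull ℝ (c '' (Y : Set (Fin d → ℤ))) ∩ L d) := by
        constructor
        · exact Set.inter_subset_inter hsub (subset_refl _)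
        · intro hsup
          exact hpNot (hsup ⟨subset_convexHull ℝ _ ⟨p, hpY, rfl⟩, ⟨p, rfl⟩⟩).1
      exact lt_of_lt_of_le (Set.ncard_lt_ncard hss hfin) hN
    obtain ⟨w₁, hw₁⟩ := IH _ hltcard Y'' hcard'' le_rfl
    have hW1a : c w₁ ∈ convexHull ℝ (c '' ((Y.erase p) : Set (Fin d → ℤ))) := by
      have h1 := hw₁ k (Finset.mem_insert_self _ _)
      rwa [hY'', Finset.erase_insert hkNot] at h1
    have hW1other : ∀ y ∈ Y, y ≠ p → y ≠ q → c w₁ ∈ convexHull ℝ (c '' ((Y.erase y) : Set (Fin d → ℤ))) := by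
      intro y hyY hyp hyq
      have hyY'' : y ∈ Y'' := Finset.mem_insert_of_mem (Finset.mem_erase.mpr ⟨hyp, hyY⟩)
      have hky : k ≠ y := fun h => hkNot (h ▸ Finset.mem_erase.mpr ⟨hyp, hyY⟩)
      have h1 := hw₁ y hyY''
      rw [hY'', Finset.erase_insert_of_ne hky] at h1
      refine (convexHull_min ?_ (convex_convexHull ℝ _)) h1
      rw [Finset.coe_insert, Set.image_insert_eq]
      apply Set.insert_subset
      · exact hmids' y hyY hyp hyq
      · refine (Set.image_mono ?_).trans (subset_convexHull ℝ _)
        exact Finset.coe_subset.mpr (Finset.erase_subset_erase _ (Finset.erase_subset _ _))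
    by_cases hW1b : c w₁ ∈ convexHull ℝ (c '' ((Y.erase q) : Set (Fin d → ℤ)))
    · refine ⟨w₁, fun y hyY => ?_⟩
      by_cases h1 : y = p
      · subst h1; exact hW1a
      by_cases h2 : y = q
      · subst h2; exact hW1b
      exact hW1other y hyY h1 h2
    have hw₁Not : w₁ ∉ Y.erase q := fun hk' =>
      hW1b (subset_convexHull ℝ _ ⟨w₁, Finset.mem_coe.mpr hk', rfl⟩)
    set Y₃ : Finset (Fin d → ℤ) := insert w₁ (Y.erase q) with hY₃
    have himg₃ : (c '' (Y₃ : Set (Fin d → ℤ))) = insert (c w₁) (c '' ((Y.erase q) : Set (Fin d → ℤ))) := by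
      rw [hY₃, Finset.coe_insert, Set.image_insert_eq]
    have hcard₃ : 2 ^ d + 1 ≤ Y₃.card := by
      rw [hY₃, Finset.card_insert_of_notMem hw₁Not, Finset.card_erase_of_mem hqY]; omega
    have hsub₃ : convexHull ℝ (c '' (Y₃ : Set (Fin d → ℤ))) ⊆ convexHull ℝ (c '' (Y : Set (Fin d → ℤ))) := by
      apply convexHull_min _ (convex_convexHull ℝ _)
      rw [himg₃]
      apply Set.insert_subset
      · exact (convexHull_mono (Set.image_mono
          (Finset.coe_subset.mpr (Finset.erase_subset _ _)))) hW1a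
      · exact (Set.image_mono (Finset.coe_subset.mpr (Finset.erase_subset _ _))).trans
          (subset_convexHull ℝ _)
    have hpqe : p ∈ Y.erase q := Finset.mem_erase.mpr ⟨hpq, hpY⟩
    have hkq : k ≠ q := fun h => hkNot (h ▸ hqpe)
    have hqNot : c q ∉ convexHull ℝ (c '' (Y₃ : Set (Fin d → ℤ))) := by
      intro hmem
      apply hc0 q hqY
      refine lem_m (convex_convexHull ℝ (c '' ((Y.erase q) : Set (Fin d → ℤ)))) (q := c p) (x := c w₁) ?_ ?_ ?_
      · exact subset_convexHull ℝ _ ⟨p, Finset.mem_coe.mpr hpqe, rfl⟩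
      · have h2 := hw₁ q (Finset.mem_insert_of_mem hqpe)
        rw [hY'', Finset.erase_insert_of_ne hkq] at h2
        rw [midpoint_comm, ← hmid']
        refine (convexHull_min ?_ (convex_convexHull ℝ _)) h2
        rw [Finset.coe_insert, Set.image_insert_eq]
        apply Set.insert_subset
        · exact subset_convexHull ℝ _ (Set.mem_insert _ _)
        · intro v hv
          apply subset_convexHull ℝ _
          apply Set.mem_insert_of_mem
          exact subset_convexHull ℝ _ ((Set.image_mono (Finset.coe_subset.mpr
            (Finset.erase_subset_erase _ (Finset.erase_subset _ _)))) hv)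
      · rw [himg₃] at hmem
        exact convexHull_mono (Set.insert_subset_insert (subset_convexHull ℝ _)) hmem
    have hltcard₃ : (convexHull ℝ (c '' (Y₃ : Set (Fin d → ℤ))) ∩ L d).ncard < N := by
      have hss : (convexHull ℝ (c '' (Y₃ : Set (Fin d → ℤ))) ∩ L d) ⊂ (convexHull ℝ (c '' (Y : Set (Fin d → ℤ))) ∩ L d) := by
        constructor
        · exact Set.inter_subset_inter hsub₃ (subset_refl _)
        · intro hsup
          exact hqNot (hsup ⟨subset_convexHull ℝ _ ⟨q, hqY, rfl⟩, ⟨q, rfl⟩⟩).1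
      exact lt_of_lt_of_le (Set.ncard_lt_ncard hss hfin) hN
    obtain ⟨w₂, hw₂⟩ := IH _ hltcard₃ Y₃ hcard₃ le_rfl
    refine ⟨w₂, fun y hyY => ?_⟩
    by_cases h2 : y = q
    · subst h2
      have h1 := hw₂ w₁ (Finset.mem_insert_self _ _)
      rwa [hY₃, Finset.erase_insert hw₁Not] at h1
    · have hyY₃ : y ∈ Y₃ := Finset.mem_insert_of_mem (Finset.mem_erase.mpr ⟨h2, hyY⟩)
      have hwy : w₁ ≠ y := fun h => hw₁Not (h ▸ Finset.mem_erase.mpr ⟨h2, hyY⟩)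
      have h1 := hw₂ y hyY₃
      rw [hY₃, Finset.erase_insert_of_ne hwy] at h1
      refine (convexHull_min ?_ (convex_convexHull ℝ _)) h1
      rw [Finset.coe_insert, Set.image_insert_eq]
      apply Set.insert_subset
      · by_cases h1' : y = p
        · subst h1'; exact hW1a
        · exact hW1other y hyY h1' h2
      · refine (Set.image_mono ?_).trans (subset_convexHull ℝ _)
        exact Finset.coe_subset.mpr (Finset.erase_subset_erase _ (Finset.erase_subset _ _))
  by_cases hza : c k ∈ convexHull ℝ (c '' ↑(Y.erase a))
  · by_cases hzb : c k ∈ convexHull ℝ (c '' ↑(Y.erase b))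
    · refine ⟨k, fun y hyY => ?_⟩
      by_cases h1 : y = a
      · subst h1; exact hza
      by_cases h2 : y = b
      · subst h2; exact hzb
      exact hmids y hyY h1 h2
    · exact main b a hbY haY hab.symm (by rw [hmid, midpoint_comm])
        (fun y hy h1 h2 => hmids y hy h2 h1) hzb
  · exact main a b haY hbY hab hmid hmids hza

lemma doignon_aux (d : ℕ) : ∀ t : ℕ, ∀ F : Fin t → Set (Fin d → ℝ),
    (∀ i, Convex ℝ (F i)) →
    (∀ G : Finset (Fin t), G.card ≤ 2 ^ d → ∃ y : Fin d → ℤ, ∀ i ∈ G, c y ∈ F i) →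
    ∃ w : Fin d → ℤ, ∀ i, c w ∈ F i := by
  intro t
  induction t using Nat.strong_induction_on with
  | _ t IHt =>
  intro F hF h
  by_cases ht : t ≤ 2 ^ d
  · obtain ⟨y, hy⟩ := h univ (by simpa using ht)
    exact ⟨y, fun i => hy i (mem_univ i)⟩
  · push_neg at ht
    have h2d : 1 ≤ 2 ^ d := Nat.one_le_two_pow
    obtain ⟨n, rfl⟩ : ∃ n, t = n + 1 := ⟨t - 1, by omega⟩
    have key1 : ∀ i : Fin (n+1), ∃ y : Fin d → ℤ, ∀ k, k ≠ i → c y ∈ F k := by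
      intro i
      have hsubfam : ∀ G : Finset (Fin n), G.card ≤ 2 ^ d →
          ∃ y : Fin d → ℤ, ∀ j ∈ G, c y ∈ F (i.succAbove j) := by
        intro G hG
        obtain ⟨y, hy⟩ := h (G.map ⟨i.succAbove, Fin.succAbove_right_injective⟩)
          (by simpa using hG)
        exact ⟨y, fun j hj => hy _ (Finset.mem_map_of_mem _ hj)⟩
      obtain ⟨y, hy⟩ := IHt n (by omega) (fun j => F (i.succAbove j)) (fun j => hF _) hsubfam
      refine ⟨y, fun k hk => ?_⟩
      obtain ⟨j, rfl⟩ := Fin.exists_succAbove_eq hk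
      exact hy j
    choose yv hyv using key1
    by_cases hinj : Function.Injective yv
    · classical
      set Y : Finset (Fin d → ℤ) := Finset.image yv univ with hY
      have hYcard : Y.card = n + 1 := by
        rw [hY, Finset.card_image_of_injective _ hinj, card_univ, Fintype.card_fin]
      obtain ⟨w, hw⟩ := key d ((convexHull ℝ (c '' (Y : Set (Fin d → ℤ))) ∩ L d).ncard) Y
        (by omega) le_rfl
      refine ⟨w, fun l => ?_⟩
      have hsubl : c '' ((Y.erase (yv l)) : Set (Fin d → ℤ)) ⊆ F l := by
        rintro v ⟨u, hu, rfl⟩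
        rw [Finset.mem_coe, Finset.mem_erase] at hu
        obtain ⟨hne, huY⟩ := hu
        obtain ⟨j, _, rfl⟩ := Finset.mem_image.mp huY
        exact hyv j l (fun hjl => hne (by rw [hjl]))
      have hmem : yv l ∈ Y := Finset.mem_image.mpr ⟨l, mem_univ l, rfl⟩
      exact convexHull_min hsubl (hF l) (hw (yv l) hmem)
    · rw [Function.not_injective_iff] at hinj
      obtain ⟨i, j, hij, hne⟩ := hinj
      refine ⟨yv i, fun m => ?_⟩
      by_cases hmi : m = i
      · subst hmi
        rw [hij]
        exact hyv j m (fun hmj => hne (hmj ▸ rfl))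
      · exact hyv i m hmi

end Doignon

/-- Doignon's theorem: if every subfamily of at most `2^d` members of a finite
family of convex sets in `ℝ^d` has a common integer point, then the whole family has a common
integer point. -/
theorem doignon (d t : ℕ) (F : Fin t → Set (Fin d → ℝ)) (hF : ∀ i, Convex ℝ (F i))
    (h : ∀ G : Finset (Fin t), G.card ≤ 2 ^ d →
      ∃ x : Fin d → ℝ, (∀ i, ∃ z : ℤ, x i = (z : ℝ)) ∧ ∀ i ∈ G, x ∈ F i) :
    ∃ x : Fin d → ℝ, (∀ i, ∃ z : ℤ, x i = (z : ℝ)) ∧ ∀ i, x ∈ F i := by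
  have h' : ∀ G : Finset (Fin t), G.card ≤ 2 ^ d →
      ∃ y : Fin d → ℤ, ∀ i ∈ G, Doignon.c y ∈ F i := by
    intro G hG
    obtain ⟨x, hx1, hx2⟩ := h G hG
    refine ⟨fun i => (hx1 i).choose, ?_⟩
    have hcx : Doignon.c (fun i => (hx1 i).choose) = x := by
      funext i
      exact ((hx1 i).choose_spec).symm
    rw [hcx]
    exact hx2
  obtain ⟨w, hw⟩ := Doignon.doignon_aux d t F hF h'
  exact ⟨Doignon.c w, fun i => ⟨w i, rfl⟩, hw⟩
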